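/- For fixed v > 0, the Rayleigh-normal distribution function Z_v is monotonically increasing in μ: if μ < τ then Z_v(μ) ≤ Z_v(τ). -/

import Mathlib

noncomputable def normalPDF (μ v x : ℝ) : ℝ :=
  (Real.sqrt (2 * Real.pi * v))⁻¹ * Real.exp (-(x - μ)^2 / (2 * v))

noncomputable def normalCDF (μ v x : ℝ) : ℝ :=
  ∫ t in Set.Iio x, normalPDF μ v t

/-- The set of fidelities appearing in the definition of the Rayleigh-normal
distribution function: `A` runs over continuously differentiable monotone increasing
functions with `Φ ≤ A ≤ 1`. -/
noncomputable def RNFidelities (μ v : ℝ) : Set ℝ :=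
  {r | ∃ A : ℝ → ℝ, ContDiff ℝ 1 A ∧ Monotone A ∧
    (∀ x, normalCDF 0 1 x ≤ A x) ∧ (∀ x, A x ≤ 1) ∧
    r = ∫ x : ℝ, Real.sqrt (deriv A x * normalPDF μ v x)}

/-- The Rayleigh-normal distribution function `Z_v(μ)`. -/
noncomputable def RayleighNormal (v μ : ℝ) : ℝ :=
  1 - (sSup (RNFidelities μ v))^2

open MeasureTheory Real Set Filter
open scoped ENNReal NNReal

lemma normalPDF_eq_gaussian (μ v : ℝ) (hv : 0 < v) :
    normalPDF μ v = ProbabilityTheory.gaussianPDFReal μ ⟨v, hv.le⟩ := rfl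

lemma normalPDF_nonneg (μ v x : ℝ) : 0 ≤ normalPDF μ v x := by
  unfold normalPDF; positivity

lemma normalCDF_mono : Monotone (normalCDF 0 1) := by
  intro a b hab
  have h1 : (0:ℝ) < 1 := one_pos
  refine setIntegral_mono_set ?_ ?_ ?_
  · rw [normalPDF_eq_gaussian 0 1 h1]
    exact (ProbabilityTheory.integrable_gaussianPDFReal 0 ⟨1, h1.le⟩).integrableOn
  · exact Filter.Eventually.of_forall fun x => normalPDF_nonneg 0 1 x
  · exact HasSubset.Subset.eventuallyLE (Set.Iio_subset_Iio hab)

lemma normalCDF_le_one (x : ℝ) : normalCDF 0 1 x ≤ 1 := by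
  have h1 : (0:ℝ) < 1 := one_pos
  have hint : Integrable (normalPDF 0 1) := by
    rw [normalPDF_eq_gaussian 0 1 h1]
    exact ProbabilityTheory.integrable_gaussianPDFReal 0 ⟨1, h1.le⟩
  have := setIntegral_le_integral (s := Set.Iio x) hint
    (Filter.Eventually.of_forall fun t => normalPDF_nonneg 0 1 t)
  refine this.trans ?_
  rw [normalPDF_eq_gaussian 0 1 h1]
  exact le_of_eq (ProbabilityTheory.integral_gaussianPDFReal_eq_one 0
    (fun h0 => one_ne_zero (α := ℝ) (congrArg Subtype.val h0)))

lemma normalCDF_nonneg (x : ℝ) : 0 ≤ normalCDF 0 1 x :=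
  setIntegral_nonneg measurableSet_Iio fun t _ => normalPDF_nonneg 0 1 t

lemma zero_mem_RNF (μ v : ℝ) : (0:ℝ) ∈ RNFidelities μ v := by
  refine ⟨fun _ => 1, contDiff_const, monotone_const,
    fun x => normalCDF_le_one x, fun x => le_refl 1, ?_⟩
  simp [deriv_const]

lemma deriv_nonneg_of_monotone {A : ℝ → ℝ} (hA : ContDiff ℝ 1 A) (hm : Monotone A)
    (x : ℝ) : 0 ≤ deriv A x := by
  have hd : HasDerivAt A (deriv A x) x :=
    ((hA.differentiable one_ne_zero) x).hasDerivAt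
  have htend : Tendsto (slope A x) (nhdsWithin x (Set.Ioi x)) (nhds (deriv A x)) :=
    (hasDerivAt_iff_tendsto_slope.mp hd).mono_left
      (nhdsWithin_mono x fun y hy => ne_of_gt hy)
  refine ge_of_tendsto htend ?_
  filter_upwards [self_mem_nhdsWithin] with y hy
  have : (0:ℝ) < y - x := sub_pos.mpr hy
  rw [slope_def_field]
  exact div_nonneg (sub_nonneg.mpr (hm (le_of_lt hy))) this.le

lemma RNF_le_one {μ v : ℝ} (hv : 0 < v) {r : ℝ} (hr : r ∈ RNFidelities μ v) : r ≤ 1 := by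
  obtain ⟨A, hA, hm, hΦ, hle1, hreq⟩ := hr
  have hdc : Continuous (deriv A) := hA.continuous_deriv le_rfl
  have hdnn : ∀ x, 0 ≤ deriv A x := deriv_nonneg_of_monotone hA hm
  -- the integrand
  set F : ℝ → ℝ := fun x => Real.sqrt (deriv A x * normalPDF μ v x) with hF
  have hFc : Continuous F := by
    apply Real.continuous_sqrt.comp
    exact hdc.mul (by unfold normalPDF; fun_prop)
  have hFnn : ∀ x, 0 ≤ F x := fun x => Real.sqrt_nonneg _
  have hrl : r = (∫⁻ x, ENNReal.ofReal (F x)).toReal := by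
    rw [hreq, integral_eq_lintegral_of_nonneg_ae
      (Filter.Eventually.of_forall hFnn) hFc.aestronglyMeasurable]
  -- bound the lintegral of the derivative
  have hAder : ∫⁻ x, ENNReal.ofReal (deriv A x) ≤ 1 := by
    have hcov : AECover (volume : Measure ℝ) atTop
        (fun n : ℕ => Set.Icc (-(n:ℝ)) (n:ℝ)) := by
      refine aecover_Icc ?_ ?_
      · exact tendsto_neg_atBot_iff.mpr tendsto_natCast_atTop_atTop
      · exact tendsto_natCast_atTop_atTop
    have hkey : ∀ n : ℕ, (∫⁻ x in Set.Icc (-(n:ℝ)) (n:ℝ),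
        ENNReal.ofReal (deriv A x)) ≤ 1 := by
      intro n
      have hint : IntegrableOn (deriv A) (Set.Icc (-(n:ℝ)) (n:ℝ)) := hdc.integrableOn_Icc
      rw [← ofReal_integral_eq_lintegral_ofReal hint
        (Filter.Eventually.of_forall fun x => hdnn x)]
      have hle : (-(n:ℝ)) ≤ (n:ℝ) := by
        have : (0:ℝ) ≤ (n:ℝ) := Nat.cast_nonneg n
        linarith
      have hFTC : ∫ x in Set.Icc (-(n:ℝ)) (n:ℝ), deriv A x = A n - A (-(n:ℝ)) := by
        rw [MeasureTheory.integral_Icc_eq_integral_Ioc,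
          ← intervalIntegral.integral_of_le hle]
        exact intervalIntegral.integral_deriv_eq_sub
          (fun x _ => (hA.differentiable one_ne_zero) x)
          (hdc.intervalIntegrable _ _)
      rw [hFTC]
      rw [show (1:ℝ≥0∞) = ENNReal.ofReal 1 from (ENNReal.ofReal_one).symm]
      apply ENNReal.ofReal_le_ofReal
      have h1 := hle1 (n:ℝ)
      have h2 := (normalCDF_nonneg (-(n:ℝ))).trans (hΦ (-(n:ℝ)))
      linarith
    have hmeas : AEMeasurable (fun x => ENNReal.ofReal (deriv A x)) volume :=
      (ENNReal.measurable_ofReal.comp hdc.measurable).aemeasurable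
    exact le_of_tendsto (hcov.lintegral_tendsto_of_countably_generated hmeas)
      (Filter.Eventually.of_forall hkey)
  -- lintegral of the pdf
  have hN : ∫⁻ x, ENNReal.ofReal (normalPDF μ v x) = 1 := by
    rw [normalPDF_eq_gaussian μ v hv]
    exact ProbabilityTheory.lintegral_gaussianPDFReal_eq_one μ
      (fun h0 => hv.ne' (congrArg Subtype.val h0))
  -- Cauchy-Schwarz
  set f : ℝ → ℝ≥0∞ := fun x => ENNReal.ofReal (Real.sqrt (deriv A x)) with hf
  set g : ℝ → ℝ≥0∞ := fun x => ENNReal.ofReal (Real.sqrt (normalPDF μ v x)) with hg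
  have hfg : ∀ x, ENNReal.ofReal (F x) = (f * g) x := by
    intro x
    simp only [hF, hf, hg, Pi.mul_apply]
    rw [Real.sqrt_mul (hdnn x), ENNReal.ofReal_mul (Real.sqrt_nonneg _)]
  have hfm : AEMeasurable f volume :=
    (ENNReal.measurable_ofReal.comp
      (Real.continuous_sqrt.comp hdc).measurable).aemeasurable
  have hgm : AEMeasurable g volume := by
    apply Measurable.aemeasurable
    apply ENNReal.measurable_ofReal.comp
    apply (Real.continuous_sqrt.comp (by unfold normalPDF; fun_prop)).measurable
  have h22 : Real.HolderConjugate 2 2 :=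
    (Real.holderConjugate_iff_eq_conjExponent one_lt_two).mpr (by norm_num)
  have hCS := ENNReal.lintegral_mul_le_Lp_mul_Lq volume h22 hfm hgm
  have hf2 : ∀ x, f x ^ (2:ℝ) = ENNReal.ofReal (deriv A x) := by
    intro x
    simp only [hf]
    rw [ENNReal.ofReal_rpow_of_nonneg (Real.sqrt_nonneg _) (by norm_num : (0:ℝ) ≤ 2)]
    congr 1
    rw [show ((2:ℝ)) = ((2:ℕ):ℝ) by norm_num, Real.rpow_natCast]
    exact Real.sq_sqrt (hdnn x)
  have hg2 : ∀ x, g x ^ (2:ℝ) = ENNReal.ofReal (normalPDF μ v x) := by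
    intro x
    simp only [hg]
    rw [ENNReal.ofReal_rpow_of_nonneg (Real.sqrt_nonneg _) (by norm_num : (0:ℝ) ≤ 2)]
    congr 1
    rw [show ((2:ℝ)) = ((2:ℕ):ℝ) by norm_num, Real.rpow_natCast]
    exact Real.sq_sqrt (normalPDF_nonneg μ v x)
  have hbound : (∫⁻ x, ENNReal.ofReal (F x)) ≤ 1 := by
    calc (∫⁻ x, ENNReal.ofReal (F x)) = ∫⁻ x, (f * g) x := by
          exact lintegral_congr fun x => hfg x
      _ ≤ (∫⁻ x, f x ^ (2:ℝ)) ^ (1/(2:ℝ)) * (∫⁻ x, g x ^ (2:ℝ)) ^ (1/(2:ℝ)) := hCS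
      _ ≤ (1:ℝ≥0∞) ^ (1/(2:ℝ)) * (1:ℝ≥0∞) ^ (1/(2:ℝ)) := by
          apply mul_le_mul'
          · apply ENNReal.rpow_le_rpow _ (by norm_num)
            calc (∫⁻ x, f x ^ (2:ℝ)) = ∫⁻ x, ENNReal.ofReal (deriv A x) :=
                  lintegral_congr fun x => hf2 x
              _ ≤ 1 := hAder
          · apply ENNReal.rpow_le_rpow _ (by norm_num)
            calc (∫⁻ x, g x ^ (2:ℝ)) = ∫⁻ x, ENNReal.ofReal (normalPDF μ v x) :=
                  lintegral_congr fun x => hg2 x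
              _ ≤ 1 := le_of_eq hN
      _ = 1 := by simp
  rw [hrl]
  calc (∫⁻ x, ENNReal.ofReal (F x)).toReal ≤ (1:ℝ≥0∞).toReal :=
        ENNReal.toReal_mono (by simp) hbound
    _ = 1 := by simp

lemma RNF_subset {v μ τ : ℝ} (h : μ ≤ τ) :
    RNFidelities τ v ⊆ RNFidelities μ v := by
  rintro r ⟨A, hA, hm, hΦ, hle1, hreq⟩
  set c : ℝ := τ - μ with hc
  have hc0 : 0 ≤ c := sub_nonneg.mpr h
  refine ⟨fun x => A (x + c), hA.comp (contDiff_id.add contDiff_const), ?_, ?_, ?_, ?_⟩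
  · exact fun a b hab => hm (by linarith)
  · intro x
    exact (normalCDF_mono (by linarith : x ≤ x + c)).trans (hΦ (x + c))
  · intro x; exact hle1 (x + c)
  · have hderiv : ∀ x, deriv (fun y => A (y + c)) x = deriv A (x + c) :=
      fun x => deriv_comp_add_const A c x
    have hpdf : ∀ x : ℝ, normalPDF μ v x = normalPDF τ v (x + c) := by
      intro x
      simp only [normalPDF, hc]
      rw [show x + (τ - μ) - τ = x - μ by ring]
    calc r = ∫ x : ℝ, Real.sqrt (deriv A x * normalPDF τ v x) := hreq
      _ = ∫ x : ℝ, Real.sqrt (deriv A (x + c) * normalPDF τ v (x + c)) :=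
          (MeasureTheory.integral_add_right_eq_self
            (fun y => Real.sqrt (deriv A y * normalPDF τ v y)) c).symm
      _ = ∫ x : ℝ, Real.sqrt (deriv (fun y => A (y + c)) x * normalPDF μ v x) := by
          congr 1; funext x; rw [hderiv x, hpdf x]

theorem stmt12 (v μ τ : ℝ) (hv : 0 < v) (h : μ < τ) :
    RayleighNormal v μ ≤ RayleighNormal v τ := by
  have hsub : RNFidelities τ v ⊆ RNFidelities μ v := RNF_subset h.le
  have hbdd : BddAbove (RNFidelities μ v) := ⟨1, fun r hr => RNF_le_one hv hr⟩
  have hne : (RNFidelities τ v).Nonempty := ⟨0, zero_mem_RNF τ v⟩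
  have h1 : sSup (RNFidelities τ v) ≤ sSup (RNFidelities μ v) :=
    csSup_le_csSup hbdd hne hsub
  have h2 : 0 ≤ sSup (RNFidelities τ v) :=
    le_csSup (hbdd.mono hsub) (zero_mem_RNF τ v)
  unfold RayleighNormal
  have := pow_le_pow_left₀ h2 h1 2
  linarith
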